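/- Let G be a finite nilpotent group and p a prime dividing |G|. Then p divides the order of every subgroup attaining the maximum Chermak–Delgado measure of G. -/

import Mathlib

/-- The Chermak–Delgado measure of a subgroup. -/
noncomputable def cdMeasure {G : Type*} [Group G] (H : Subgroup G) : ℕ :=
  Nat.card H * Nat.card (Subgroup.centralizer (H : Set G))

/-- A nontrivial normal subgroup of a nilpotent group meets the center nontrivially. -/
lemma normal_inf_center_ne_bot {G : Type*} [Group G] [Group.IsNilpotent G]
    (N : Subgroup G) [hN : N.Normal] (hbot : N ≠ ⊥) :
    N ⊓ Subgroup.center G ≠ ⊥ := by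
  obtain ⟨n, hn⟩ := Group.IsNilpotent.nilpotent (G := G)
  have key : ∀ k, N ⊓ upperCentralSeries G k ≠ ⊥ → N ⊓ Subgroup.center G ≠ ⊥ := by
    intro k
    induction k with
    | zero => intro h; exact absurd (by rw [upperCentralSeries, upperCentralSeries_zero, inf_bot_eq]) h
    | succ k ih =>
      intro h
      by_cases hk : N ⊓ upperCentralSeries G k = ⊥
      · obtain ⟨⟨x, hx⟩, hx1⟩ := (Subgroup.ne_bot_iff_exists_ne_one).mp h
        have hxN : x ∈ N := hx.1
        have hxZ : x ∈ upperCentralSeries G (k + 1) := hx.2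
        have hxc : x ∈ Subgroup.center G := by
          rw [Subgroup.mem_center_iff]
          intro y
          have hc1 : x * y * x⁻¹ * y⁻¹ ∈ upperCentralSeries G k :=
            (mem_upperCentralSeries_succ_iff).mp hxZ y
          have hc2 : x * y * x⁻¹ * y⁻¹ ∈ N := by
            have : y * x⁻¹ * y⁻¹ ∈ N := hN.conj_mem _ (N.inv_mem hxN) y
            have := N.mul_mem hxN this
            convert this using 1
            group
          have : x * y * x⁻¹ * y⁻¹ ∈ (⊥ : Subgroup G) := by
            rw [← hk]; exact ⟨hc2, hc1⟩
          rw [Subgroup.mem_bot] at this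
          calc y * x = (x * y * x⁻¹ * y⁻¹)⁻¹ * (x * y) := by group
            _ = x * y := by rw [this]; group
        intro hcon
        apply hx1
        have : x ∈ N ⊓ Subgroup.center G := ⟨hxN, hxc⟩
        rw [hcon, Subgroup.mem_bot] at this
        exact Subtype.ext this
      · exact ih hk
  apply key n
  rw [upperCentralSeries, hn, inf_top_eq]
  exact hbot

theorem prime_dvd_card_of_cd_max_of_nilpotent
    (G : Type*) [Group G] [Finite G] [Group.IsNilpotent G]
    (p : ℕ) (hp : p.Prime) (hpG : p ∣ Nat.card G)
    (H : Subgroup G) (hmax : ∀ K : Subgroup G, cdMeasure K ≤ cdMeasure H) :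
    p ∣ Nat.card H := by
  haveI : Fact p.Prime := ⟨hp⟩
  set C := Subgroup.centralizer (H : Set G) with hC
  set D := Subgroup.centralizer (C : Set G) with hD
  have hHD : H ≤ D := Subgroup.le_centralizer_iff.mpr le_rfl
  have h1 : Nat.card C * Nat.card D ≤ Nat.card H * Nat.card C := hmax C
  have hCpos : 0 < Nat.card C := Nat.card_pos
  have hDH : Nat.card D ≤ Nat.card H := by
    rw [mul_comm (Nat.card H)] at h1
    exact Nat.le_of_mul_le_mul_left h1 hCpos
  have hcard : Nat.card D = Nat.card H :=
    le_antisymm hDH (Subgroup.card_le_of_le hHD)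
  -- the center is contained in D
  have hZD : Subgroup.center G ≤ D := Subgroup.center_le_centralizer _
  -- p divides the order of the center
  obtain ⟨P⟩ : Nonempty (Sylow p G) := inferInstance
  haveI hPn : (P : Subgroup G).Normal := by
    have h := (isNilpotent_of_finite_tfae (G := G)).out 0 3
    exact h.mp inferInstance p ⟨hp⟩ P
  have hcardP : Nat.card (P : Subgroup G) = p ^ (Nat.card G).factorization p :=
    P.card_eq_multiplicity
  have hfpos : 0 < (Nat.card G).factorization p :=
    Nat.Prime.factorization_pos_of_dvd hp (Nat.card_pos.ne') hpG
  have hpP : p ∣ Nat.card (P : Subgroup G) := by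
    rw [hcardP]
    exact dvd_pow_self p hfpos.ne'
  have hPbot : (P : Subgroup G) ≠ ⊥ := by
    intro hcon
    rw [hcon, Subgroup.card_bot, Nat.dvd_one] at hpP
    exact hp.one_lt.ne' hpP
  have hne : (P : Subgroup G) ⊓ Subgroup.center G ≠ ⊥ := normal_inf_center_ne_bot _ hPbot
  set S := (P : Subgroup G) ⊓ Subgroup.center G with hS
  have hSp : IsPGroup p S := P.isPGroup'.to_inf_left
  obtain ⟨k, hk⟩ := IsPGroup.iff_card.mp hSp
  have hk1 : 1 < Nat.card S := (Subgroup.one_lt_card_iff_ne_bot S).mpr hne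
  have hkpos : 0 < k := by
    rcases Nat.eq_zero_or_pos k with h0 | h; · rw [h0, pow_zero] at hk; omega
    exact h
  have hpS : p ∣ Nat.card S := by rw [hk]; exact dvd_pow_self p hkpos.ne'
  calc p ∣ Nat.card S := hpS
    _ ∣ Nat.card (Subgroup.center G) := Subgroup.card_dvd_of_le inf_le_right
    _ ∣ Nat.card D := Subgroup.card_dvd_of_le hZD
    _ ∣ Nat.card H := by rw [hcard]
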